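/- Suppose x ∈ 𝓞_K satisfies |N(x)| = p for a prime number p, and x divides ζ − ξ in 𝓞_K for some integer ξ. Then for every polynomial Φ with integer coefficients, x divides Φ(ζ) in 𝓞_K if and only if p divides Φ(ξ) in ℤ. -/

import Mathlib

open NumberField Polynomial

noncomputable instance (n : ℕ+) : NumberField (CyclotomicField n ℚ) :=
  @IsCyclotomicExtension.numberField {(n : ℕ)} ℚ (CyclotomicField n ℚ) _ _ (CyclotomicField.algebra _ _) _ _
    inferInstance

/-- Kummer's congruence criterion: if `x` has prime norm `p` and divides `ζ - ξ`, then for any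
integer polynomial `Φ`, `x` divides `Φ(ζ)` if and only if `p` divides `Φ(ξ)` in `ℤ`. -/
theorem dvd_aeval_iff_dvd_eval (l : ℕ+) (hl : (l : ℕ).Prime)
    (ζ : 𝓞 (CyclotomicField l ℚ)) (hζ : IsPrimitiveRoot ζ l)
    (p : ℕ) (hp : p.Prime)
    (x : 𝓞 (CyclotomicField l ℚ))
    (hx : (Algebra.norm ℤ x).natAbs = p)
    (ξ : ℤ) (hdvd : x ∣ ζ - (ξ : 𝓞 (CyclotomicField l ℚ))) :
    ∀ Φ : ℤ[X], x ∣ Polynomial.aeval ζ Φ ↔ (p : ℤ) ∣ Φ.eval ξ := by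
  set K := CyclotomicField l ℚ
  haveI : IsGalois ℚ K := @IsCyclotomicExtension.isGalois {(l : ℕ)} ℚ K _ _ _ (haveI : NeZero ((l : ℕ) : ℚ) := ⟨by exact_mod_cast l.ne_zero⟩; CyclotomicField.isCyclotomicExtension (l : ℕ) ℚ)
  have hcast : ((Algebra.norm ℤ x).natAbs : ℤ) = (p : ℤ) := by exact_mod_cast hx
  -- x divides the image of its own norm
  have hxnorm : x ∣ ((Algebra.norm ℤ x : ℤ) : 𝓞 K) := by
    have h := RingOfIntegers.dvd_norm ℚ x
    have heq : algebraMap (𝓞 ℚ) (𝓞 K) (RingOfIntegers.norm ℚ x)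
        = ((Algebra.norm ℤ x : ℤ) : 𝓞 K) := by
      apply (RingOfIntegers.coe_injective (K := K))
      have h1 : (algebraMap (𝓞 K) K) ((algebraMap (𝓞 ℚ) (𝓞 K)) (RingOfIntegers.norm ℚ x))
          = algebraMap ℚ K (Algebra.norm ℚ (algebraMap (𝓞 K) K x)) := rfl
      rw [h1, show Algebra.norm ℚ (algebraMap (𝓞 K) K x) = ((Algebra.norm ℤ x : ℤ) : ℚ) from
        (Algebra.coe_norm_int x).symm, map_intCast, map_intCast]
    rwa [heq] at h
  -- key lemma: for integers n, x ∣ (n : 𝓞 K) ↔ p ∣ n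
  have key : ∀ n : ℤ, x ∣ ((n : ℤ) : 𝓞 K) ↔ (p : ℤ) ∣ n := by
    intro n
    constructor
    · intro h
      have hnd : Algebra.norm ℤ x ∣ Algebra.norm ℤ ((n : ℤ) : 𝓞 K) := map_dvd _ h
      have hn : ((n : ℤ) : 𝓞 K) = algebraMap ℤ (𝓞 K) n := by simp
      rw [hn] at hnd
      let b := Module.Free.chooseBasis ℤ (𝓞 K)
      rw [Algebra.norm_algebraMap_of_basis b] at hnd
      have hpd : (p : ℤ) ∣ n ^ Fintype.card (Module.Free.ChooseBasisIndex ℤ (𝓞 K)) := by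
        rw [← hx]
        exact (Int.natAbs_dvd).2 hnd
      exact Int.Prime.dvd_pow' hp hpd
    · intro h
      have hxp : x ∣ ((p : ℤ) : 𝓞 K) := by
        rcases Int.natAbs_eq (Algebra.norm ℤ x) with he | he
        · rw [he, hcast] at hxnorm; exact hxnorm
        · rw [he, hcast] at hxnorm
          push_cast at hxnorm
          exact (dvd_neg).1 hxnorm
      obtain ⟨c, hc⟩ := h
      refine hxp.trans ⟨(c : 𝓞 K), ?_⟩
      rw [hc]; push_cast; ring
  intro Φ
  -- Φ(ζ) ≡ Φ(ξ) mod x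
  have hsub : x ∣ aeval ζ Φ - aeval ((ξ : ℤ) : 𝓞 K) Φ := by
    have := Polynomial.sub_dvd_eval_sub ζ ((ξ : ℤ) : 𝓞 K) (Φ.map (algebraMap ℤ (𝓞 K)))
    simpa [Polynomial.eval_map, Polynomial.aeval_def] using hdvd.trans this
  have haeval : aeval ((ξ : ℤ) : 𝓞 K) Φ = ((Φ.eval ξ : ℤ) : 𝓞 K) := by
    rw [show ((ξ : ℤ) : 𝓞 K) = algebraMap ℤ (𝓞 K) ξ from by simp,
      Polynomial.aeval_algebraMap_apply]
    simp [Polynomial.aeval_def, Polynomial.eval₂_eq_eval_map]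
  constructor
  · intro h
    have h2 : x ∣ aeval ((ξ : ℤ) : 𝓞 K) Φ := by
      have := dvd_sub h hsub
      simpa using this
    rw [haeval] at h2
    exact (key _).1 h2
  · intro h
    have h2 : x ∣ aeval ((ξ : ℤ) : 𝓞 K) Φ := by rw [haeval]; exact (key _).2 h
    have := dvd_add hsub h2
    simpa using this
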